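/- Let P be a phase-shift covariant phase space observable with structure data (μ, η_m) and suppose its radial margin equals the sharp number observable, i.e., c_{mm}(X) := ∫_X ‖η_m(x)‖² dμ(x) = δ_m(X) (Dirac measure at m) for all m. Then the phase matrix of the angle margin is c_{mn} = δ_{mn}, so the angle margin is the trivial phase observable Θ ↦ (1/2π)∫_Θ dθ · I. -/

import Mathlib

open MeasureTheory Complex Real
open scoped InnerProductSpace Classical

noncomputable section

/-- The Hilbert space `ℓ²(ℕ)`. -/
abbrev H : Type := lp (fun _ : ℕ => ℂ) 2

/-- The standard orthonormal basis vector `|n⟩` of `ℓ²(ℕ)`. -/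
def ket (n : ℕ) : H := lp.single 2 n 1

lemma inner_ket_left (m : ℕ) (w : H) : ⟪ket m, w⟫_ℂ = w m := by
  rw [ket, lp.inner_single_left]
  simp [RCLike.inner_apply]

lemma inner_ket_ket (m n : ℕ) : ⟪ket m, ket n⟫_ℂ = if m = n then 1 else 0 := by
  rw [inner_ket_left]
  rcases eq_or_ne m n with h | h
  · subst h; simp [ket, lp.single_apply_self]
  · simp [ket, lp.single_apply_ne 2 n _ h, h]

lemma clm_ext_ket {A B : H →L[ℂ] H}
    (h : ∀ m n : ℕ, ⟪ket m, A (ket n)⟫_ℂ = ⟪ket m, B (ket n)⟫_ℂ) : A = B := by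
  have hk : ∀ n : ℕ, A (ket n) = B (ket n) := by
    intro n
    apply lp.ext
    funext m
    have := h m n
    rwa [inner_ket_left, inner_ket_left] at this
  refine ContinuousLinearMap.ext fun f => ?_
  have hs : HasSum (fun i : ℕ => lp.single 2 i (f i)) f :=
    lp.hasSum_single (by norm_num) f
  have hsingle : ∀ i : ℕ, lp.single 2 i (f i) = f i • ket i := by
    intro i
    rw [ket, ← lp.single_smul]
    norm_num
  have hA : HasSum (fun i : ℕ => A (lp.single 2 i (f i))) (A f) := hs.mapL A
  have hB : HasSum (fun i : ℕ => B (lp.single 2 i (f i))) (B f) := hs.mapL B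
  have heq : (fun i : ℕ => A (lp.single 2 i (f i)))
      = fun i : ℕ => B (lp.single 2 i (f i)) := by
    funext i
    rw [hsingle, A.map_smul, B.map_smul, hk]
  rw [heq] at hA
  exact hA.unique hB

/-- If the radial margin of a phase-shift covariant phase space observable `P` with
structure data `(μ, η_m)` is the sharp number observable, i.e.
`c_{mm}(X) = ∫_X ‖η_m(x)‖² dμ(x) = δ_m(X)`, then the phase matrix of the angle margin is
`c_{mn} = δ_{mn}`, so the angle margin is the trivial phase observable
`Θ ↦ (2π)⁻¹ λ(Θ) · I`. -/
theorem stmt16 (μ : Measure ℝ) [IsProbabilityMeasure μ] (hμ : μ (Set.Iio 0) = 0)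
    (η : ℕ → ℝ → H)
    (hη_meas : ∀ m : ℕ, AEStronglyMeasurable (η m) μ)
    (hη_norm : ∀ m : ℕ, ∫ x, ‖η m x‖ ^ 2 ∂μ = 1)
    (P : Set ℝ → Set ℝ → H →L[ℂ] H)
    (hP : ∀ (X Θ : Set ℝ), MeasurableSet X → MeasurableSet Θ →
      X ⊆ Set.Ici 0 → Θ ⊆ Set.Ico 0 (2*π) → ∀ m n : ℕ,
      ⟪ket m, P X Θ (ket n)⟫_ℂ
        = (2*π)⁻¹ * ∫ x in X,
            (∫ θ in Θ, Complex.exp (Complex.I * (θ : ℂ) * ((m : ℂ) - (n : ℂ)))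
              * ⟪η m x, η n x⟫_ℂ) ∂μ)
    -- the radial margin is the sharp number observable, `c_{mm}(X) = δ_m(X)`:
    (hrad : ∀ (m : ℕ) (X : Set ℝ), MeasurableSet X → X ⊆ Set.Ici 0 →
      ∫ x in X, ‖η m x‖ ^ 2 ∂μ = if (m : ℝ) ∈ X then 1 else 0) :
    -- then the phase matrix of the angle margin is `c_{mn} = δ_{mn}` …
    (∀ m n : ℕ, ∫ x, ⟪η m x, η n x⟫_ℂ ∂μ = if m = n then 1 else 0) ∧
    -- … and the angle margin is the trivial phase observable `Θ ↦ (2π)⁻¹ λ(Θ) · I`: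
    (∀ Θ : Set ℝ, MeasurableSet Θ → Θ ⊆ Set.Ico 0 (2*π) →
      P (Set.Ici 0) Θ = (((volume Θ).toReal / (2*π) : ℝ) : ℂ) • (1 : H →L[ℂ] H)) := by
  -- `‖η m ·‖²` is integrable (else its integral would be `0`, not `1`)
  have hInt : ∀ m : ℕ, Integrable (fun x => ‖η m x‖ ^ 2) μ := by
    intro m
    by_contra h
    have := hη_norm m
    rw [integral_undef h] at this
    norm_num at this
  -- almost every point is nonnegative
  have hae_pos : ∀ᵐ x ∂μ, x ∈ Set.Ici (0:ℝ) := by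
    rw [ae_iff]
    convert hμ using 2
    ext x
    simp [Set.mem_Iio, not_le]
  -- `η m` vanishes a.e. off the singleton `{m}`
  have hzero : ∀ m : ℕ, ∀ᵐ x ∂μ, x ≠ (m : ℝ) → η m x = 0 := by
    intro m
    set S : Set ℝ := Set.Ici 0 \ {(m : ℝ)} with hS
    have hSm : MeasurableSet S := measurableSet_Ici.diff (measurableSet_singleton _)
    have h0 : ∫ x in S, ‖η m x‖ ^ 2 ∂μ = 0 := by
      rw [hrad m S hSm Set.diff_subset]
      simp [hS]
    have h1 : ∀ᵐ x ∂(μ.restrict S), ‖η m x‖ ^ 2 = 0 := by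
      have := (integral_eq_zero_iff_of_nonneg_ae
        (Filter.Eventually.of_forall fun x => by positivity)
        ((hInt m).restrict (s := S))).mp h0
      filter_upwards [this] with x hx using hx
    have h2 : ∀ᵐ x ∂μ, x ∈ S → ‖η m x‖ ^ 2 = 0 := (ae_restrict_iff' hSm).mp h1
    filter_upwards [h2, hae_pos] with x hx hpos hne
    have hmem : x ∈ S := ⟨hpos, by simpa using hne⟩
    have := hx hmem
    have hnorm : ‖η m x‖ = 0 := by nlinarith [norm_nonneg (η m x)]
    exact norm_eq_zero.mp hnorm
  -- the phase matrix
  have hc : ∀ m n : ℕ, ∫ x, ⟪η m x, η n x⟫_ℂ ∂μ = if m = n then 1 else 0 := by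
    intro m n
    rcases eq_or_ne m n with h | h
    · subst h
      rw [if_pos rfl]
      have hpt : ∀ x, ⟪η m x, η m x⟫_ℂ = ((‖η m x‖ ^ 2 : ℝ) : ℂ) := by
        intro x
        rw [inner_self_eq_norm_sq_to_K]
        norm_cast
      simp_rw [hpt]
      have h1 : ∫ x, ((‖η m x‖ ^ 2 : ℝ) : ℂ) ∂μ = ((∫ x, ‖η m x‖ ^ 2 ∂μ : ℝ) : ℂ) :=
        integral_ofReal
      rw [h1, hη_norm m]
      norm_num
    · rw [if_neg h]
      have hmn : (m : ℝ) ≠ (n : ℝ) := by exact_mod_cast h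
      have hae : ∀ᵐ x ∂μ, ⟪η m x, η n x⟫_ℂ = 0 := by
        filter_upwards [hzero m, hzero n] with x h1 h2
        by_cases hx : x = (m : ℝ)
        · rw [h2 (hx ▸ hmn), inner_zero_right]
        · rw [h1 hx, inner_zero_left]
      rw [integral_congr_ae hae, integral_zero]
  refine ⟨hc, ?_⟩
  intro Θ hΘm hΘs
  have hμr : μ.restrict (Set.Ici (0:ℝ)) = μ :=
    Measure.restrict_eq_self_of_ae_mem hae_pos
  apply clm_ext_ket
  intro m n
  rw [hP (Set.Ici 0) Θ measurableSet_Ici hΘm (subset_refl _) hΘs m n]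
  have hin : ∀ x : ℝ,
      (∫ θ in Θ, Complex.exp (Complex.I * (θ : ℂ) * ((m : ℂ) - (n : ℂ)))
        * ⟪η m x, η n x⟫_ℂ)
      = (∫ θ in Θ, Complex.exp (Complex.I * (θ : ℂ) * ((m : ℂ) - (n : ℂ))))
        * ⟪η m x, η n x⟫_ℂ := by
    intro x
    exact integral_mul_const _ _
  simp_rw [hin]
  rw [integral_const_mul, hμr, hc m n]
  have hRHS : ⟪ket m, ((((volume Θ).toReal / (2*π) : ℝ) : ℂ) • (1 : H →L[ℂ] H)) (ket n)⟫_ℂ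
      = (((volume Θ).toReal / (2*π) : ℝ) : ℂ) * (if m = n then 1 else 0) := by
    rw [ContinuousLinearMap.smul_apply, ContinuousLinearMap.one_apply, inner_smul_right,
      inner_ket_ket]
  rw [hRHS]
  rcases eq_or_ne m n with h | h
  · subst h
    simp only [if_pos rfl, sub_self, mul_zero, Complex.exp_zero, mul_one]
    rw [integral_const, measureReal_restrict_apply_univ, measureReal_def, Complex.real_smul]
    push_cast
    ring
  · rw [if_neg h]
    ring
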